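/- Let I and J be two disjoint closed intervals in ℝ with |I| + |J| = 1 and |I| ≠ |J|, and let A = I ∪ J. Then \hat{\chi}_A(x) ≠ 0 for every x ∈ (−1, 1). -/

import Mathlib

open MeasureTheory Real

/-- The Fourier transform of the indicator function of a set `A ⊆ ℝ`,
`\hat{χ}_A(x) = ∫_A e^{-2πi x t} dt`. -/
noncomputable def ftInd1 (A : Set ℝ) (x : ℝ) : ℂ :=
  ∫ t in A, Complex.exp (((-(2 * π * x * t) : ℝ) : ℂ) * Complex.I)

lemma exp_I_sub_exp_I (s t : ℝ) :
    Complex.exp (((s+t : ℝ) : ℂ)*Complex.I) - Complex.exp (((s-t : ℝ) : ℂ)*Complex.I)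
      = Complex.exp ((s : ℂ)*Complex.I) * (2 * (Real.sin t : ℂ) * Complex.I) := by
  have h1 : ((s+t : ℝ) : ℂ)*Complex.I = (s : ℂ)*Complex.I + (t : ℂ)*Complex.I := by
    push_cast; ring
  have h2 : ((s-t : ℝ) : ℂ)*Complex.I = (s : ℂ)*Complex.I + ((-t : ℝ) : ℂ)*Complex.I := by
    push_cast; ring
  rw [h1, h2, Complex.exp_add, Complex.exp_add, Complex.exp_mul_I, Complex.exp_mul_I]
  simp only [Complex.exp_mul_I, Complex.ofReal_neg, Complex.cos_neg, Complex.sin_neg,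
    Complex.ofReal_sin]
  ring

lemma abs_exp_sub_exp (θ φ : ℝ) :
    ‖Complex.exp ((θ : ℂ)*Complex.I) - Complex.exp ((φ : ℂ)*Complex.I)‖
      = 2 * |Real.sin ((θ-φ)/2)| := by
  have h := exp_I_sub_exp_I ((θ+φ)/2) ((θ-φ)/2)
  rw [show (θ+φ)/2 + (θ-φ)/2 = θ by ring, show (θ+φ)/2 - (θ-φ)/2 = φ by ring] at h
  rw [h]
  rw [norm_mul, norm_mul, norm_mul]
  simp [Complex.norm_exp, -Complex.ofReal_sin]

open intervalIntegral in
lemma integral_Icc_exp (a b x : ℝ) (hle : a ≤ b) (hx : x ≠ 0) :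
    ∫ t in Set.Icc a b, Complex.exp (((-(2 * π * x * t) : ℝ) : ℂ) * Complex.I)
      = (Complex.exp ((((-(2*π*x) : ℝ) : ℂ) * Complex.I) * b)
          - Complex.exp ((((-(2*π*x) : ℝ) : ℂ) * Complex.I) * a))
        / ((((-(2*π*x) : ℝ) : ℂ)) * Complex.I) := by
  have hc : (((-(2*π*x) : ℝ) : ℂ)) * Complex.I ≠ 0 := by
    apply mul_ne_zero _ Complex.I_ne_zero
    simp [Real.pi_ne_zero, hx]
  have heq : (fun t : ℝ => Complex.exp (((-(2 * π * x * t) : ℝ) : ℂ) * Complex.I))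
      = fun t : ℝ => Complex.exp ((((-(2*π*x) : ℝ) : ℂ) * Complex.I) * t) := by
    funext t; congr 1; push_cast; ring
  rw [show (∫ t in Set.Icc a b, Complex.exp (((-(2 * π * x * t) : ℝ) : ℂ) * Complex.I))
      = ∫ t in Set.Icc a b, Complex.exp ((((-(2*π*x) : ℝ) : ℂ) * Complex.I) * t) by rw [heq]]
  rw [MeasureTheory.integral_Icc_eq_integral_Ioc, ← intervalIntegral.integral_of_le hle]
  exact integral_exp_mul_complex hc

lemma sin_abs_helper {x p : ℝ} (hx : x ≠ 0) (hp : 0 < p) (h1 : |x| * p < 1) :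
    |Real.sin (π * x * p)| = Real.sin (π * |x| * p) := by
  have hxp : 0 < |x| := abs_pos.mpr hx
  have h0 : 0 < Real.sin (π * |x| * p) :=
    Real.sin_pos_of_pos_of_lt_pi (by positivity) (by nlinarith [Real.pi_pos])
  rcases abs_cases x with ⟨h, _⟩ | ⟨h, _⟩
  · rw [show π * x * p = π * |x| * p by rw [h]]
    exact abs_of_pos h0
  · rw [show π * x * p = -(π * |x| * p) by rw [h]; ring, Real.sin_neg, abs_neg]
    exact abs_of_pos h0

lemma sin_inj_helper {x p q : ℝ} (hx0 : x ≠ 0) (hx : |x| < 1) (hp : 0 < p) (hq : 0 < q)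
    (hpq : p + q = 1) (hs : Real.sin (π * |x| * p) = Real.sin (π * |x| * q)) : p = q := by
  have hxp : 0 < |x| := abs_pos.mpr hx0
  have hpi := Real.pi_pos
  have hp1 : p < 1 := by linarith
  have hq1 : q < 1 := by linarith
  have h := Real.sin_sub_sin (π * |x| * p) (π * |x| * q)
  rw [hs, sub_self] at h
  have hcos : 0 < Real.cos ((π * |x| * p + π * |x| * q) / 2) := by
    apply Real.cos_pos_of_mem_Ioo
    have hs2 : π * |x| * p + π * |x| * q = π * |x| := by linear_combination (π * |x|) * hpq
    have hs3 : π * |x| < π := mul_lt_of_lt_one_right hpi hx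
    constructor
    · nlinarith [mul_pos (mul_pos hpi hxp) hp, mul_pos (mul_pos hpi hxp) hq]
    · nlinarith
  have hsin : Real.sin ((π * |x| * p - π * |x| * q) / 2) = 0 := by
    rcases mul_eq_zero.mp h.symm with h' | h'
    · rcases mul_eq_zero.mp h' with h'' | h''
      · norm_num at h''
      · exact h''
    · exact absurd h' hcos.ne'
  have hb1 : π * |x| * p < π := by nlinarith [mul_lt_of_lt_one_right hxp hp1]
  have hb2 : π * |x| * q < π := by nlinarith [mul_lt_of_lt_one_right hxp hq1]
  have hb3 : 0 < π * |x| * p := by positivity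
  have hb4 : 0 < π * |x| * q := by positivity
  rw [Real.sin_eq_zero_iff_of_lt_of_lt (by linarith) (by linarith)] at hsin
  have h2 : (π * |x|) * (p - q) = 0 := by linear_combination 2 * hsin
  rcases mul_eq_zero.mp h2 with h' | h'
  · exact absurd h' (by positivity)
  · linarith

theorem two_intervals_no_zero_in_unit_interval
    (a b c d : ℝ) (hab : a < b) (hcd : c < d)
    (hdisj : Disjoint (Set.Icc a b) (Set.Icc c d))
    (hsum : (b - a) + (d - c) = 1) (hne : b - a ≠ d - c) :
    ∀ x ∈ Set.Ioo (-1 : ℝ) 1, ftInd1 (Set.Icc a b ∪ Set.Icc c d) x ≠ 0 := by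
  intro x hx
  rcases eq_or_ne x 0 with rfl | hx0
  · -- x = 0 : the integral is the total length, which is 1
    unfold ftInd1
    have h1 : (∫ t in (Set.Icc a b ∪ Set.Icc c d),
        Complex.exp (((-(2 * π * (0:ℝ) * t) : ℝ) : ℂ) * Complex.I)) =
        ∫ _t in (Set.Icc a b ∪ Set.Icc c d), (1:ℂ) := by
      simp
    rw [h1, setIntegral_const]
    rw [measureReal_union hdisj measurableSet_Icc (by simp [Real.volume_Icc]) (by simp [Real.volume_Icc])]
    rw [Real.volume_real_Icc_of_le hab.le, Real.volume_real_Icc_of_le hcd.le]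
    rw [hsum]
    norm_num
  · -- x ≠ 0
    have hx1 : |x| < 1 := abs_lt.mpr ⟨hx.1, hx.2⟩
    have hxp : 0 < |x| := abs_pos.mpr hx0
    have hcont : Continuous fun t : ℝ =>
        Complex.exp (((-(2 * π * x * t) : ℝ) : ℂ) * Complex.I) := by
      fun_prop
    unfold ftInd1
    rw [MeasureTheory.setIntegral_union hdisj measurableSet_Icc
      (hcont.integrableOn_Icc) (hcont.integrableOn_Icc)]
    rw [integral_Icc_exp a b x hab.le hx0, integral_Icc_exp c d x hcd.le hx0]
    intro hzero
    have hc : (((-(2*π*x) : ℝ) : ℂ)) * Complex.I ≠ 0 := by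
      apply mul_ne_zero _ Complex.I_ne_zero
      simp [Real.pi_ne_zero, hx0]
    rw [← add_div, div_eq_zero_iff] at hzero
    have hsumz := hzero.resolve_right hc
    -- turn into equality of absolute values
    have habs : ‖Complex.exp ((((-(2*π*x) : ℝ) : ℂ) * Complex.I) * b)
        - Complex.exp ((((-(2*π*x) : ℝ) : ℂ) * Complex.I) * a)‖
        = ‖Complex.exp ((((-(2*π*x) : ℝ) : ℂ) * Complex.I) * d)
        - Complex.exp ((((-(2*π*x) : ℝ) : ℂ) * Complex.I) * c)‖ := by
      have : Complex.exp ((((-(2*π*x) : ℝ) : ℂ) * Complex.I) * b)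
          - Complex.exp ((((-(2*π*x) : ℝ) : ℂ) * Complex.I) * a)
          = -(Complex.exp ((((-(2*π*x) : ℝ) : ℂ) * Complex.I) * d)
          - Complex.exp ((((-(2*π*x) : ℝ) : ℂ) * Complex.I) * c)) := by
        linear_combination hsumz
      rw [this, norm_neg]
    have harg : ∀ u : ℝ, (((-(2*π*x) : ℝ) : ℂ) * Complex.I) * u
        = ((-(2*π*x*u) : ℝ) : ℂ) * Complex.I := by
      intro u; push_cast; ring
    rw [harg a, harg b, harg c, harg d, abs_exp_sub_exp, abs_exp_sub_exp] at habs
    rw [show (-(2*π*x*b) - -(2*π*x*a))/2 = -(π * x * (b-a)) by ring,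
      show (-(2*π*x*d) - -(2*π*x*c))/2 = -(π * x * (d-c)) by ring,
      Real.sin_neg, Real.sin_neg, abs_neg, abs_neg] at habs
    have hab' : 0 < b - a := by linarith
    have hcd' : 0 < d - c := by linarith
    have hlt1 : |x| * (b - a) < 1 := by nlinarith
    have hlt2 : |x| * (d - c) < 1 := by nlinarith
    have habs' : Real.sin (π * |x| * (b-a)) = Real.sin (π * |x| * (d-c)) := by
      rw [← sin_abs_helper hx0 hab' hlt1, ← sin_abs_helper hx0 hcd' hlt2]
      linarith
    exact hne (sin_inj_helper hx0 hx1 hab' hcd' hsum habs')
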